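/- Let b, x_1, x_2, x_3, x_4 be i.i.d. uniform bits and define the random 4-tuple E = (x_2 b + b x_1, x_2 b + b x_3, x_3 b + b x_4, b) over GF(2). Then the Shannon entropy of E in bits equals 5/2; that is, −Σ_{e ∈ {0,1}^4} Pr[E = e] · log₂ Pr[E = e] = 5/2 (with the convention 0 · log₂ 0 = 0). -/
import Mathlib


/-- The distribution of the LF2 error 4-tuple
`E = (x₂b + bx₁, x₂b + bx₃, x₃b + bx₄, b)` where `b, x₁, x₂, x₃, x₄` are i.i.d. uniform
bits (here `q = (b, x₁, x₂, x₃, x₄)`). -/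
noncomputable def lf2ErrorDist : PMF (ZMod 2 × ZMod 2 × ZMod 2 × ZMod 2) :=
  PMF.map
    (fun q : ZMod 2 × ZMod 2 × ZMod 2 × ZMod 2 × ZMod 2 =>
      (q.2.2.1 * q.1 + q.1 * q.2.1,
       q.2.2.1 * q.1 + q.1 * q.2.2.2.1,
       q.2.2.2.1 * q.1 + q.1 * q.2.2.2.2,
       q.1))
    (PMF.uniformOfFintype (ZMod 2 × ZMod 2 × ZMod 2 × ZMod 2 × ZMod 2))

lemma lf2_apply (e : ZMod 2 × ZMod 2 × ZMod 2 × ZMod 2) :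
    lf2ErrorDist e = ((Finset.univ.filter (fun q : ZMod 2 × ZMod 2 × ZMod 2 × ZMod 2 × ZMod 2 =>
      e = (q.2.2.1 * q.1 + q.1 * q.2.1,
       q.2.2.1 * q.1 + q.1 * q.2.2.2.1,
       q.2.2.2.1 * q.1 + q.1 * q.2.2.2.2,
       q.1))).card : ENNReal) * 32⁻¹ := by
  simp [lf2ErrorDist, PMF.map_apply, PMF.uniformOfFintype_apply, tsum_fintype,
    Finset.sum_ite, Finset.sum_const]

lemma lf2_card : ∀ e : ZMod 2 × ZMod 2 × ZMod 2 × ZMod 2,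
    (Finset.univ.filter (fun q : ZMod 2 × ZMod 2 × ZMod 2 × ZMod 2 × ZMod 2 =>
      e = (q.2.2.1 * q.1 + q.1 * q.2.1,
       q.2.2.1 * q.1 + q.1 * q.2.2.2.1,
       q.2.2.2.1 * q.1 + q.1 * q.2.2.2.2,
       q.1))).card = if e = (0, 0, 0, 0) then 16 else if e.2.2.2 = 1 then 2 else 0 := by
  decide

lemma lf2_val (e : ZMod 2 × ZMod 2 × ZMod 2 × ZMod 2) :
    (lf2ErrorDist e).toReal =
      if e = (0, 0, 0, 0) then 1/2 else if e.2.2.2 = 1 then 1/16 else 0 := by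
  rw [lf2_apply, lf2_card e]
  split_ifs <;> simp [ENNReal.toReal_mul] <;> norm_num


/-- The Shannon entropy (in bits) of the error tuple `E` equals `5/2`:
`−Σ_e Pr[E = e] · log₂ Pr[E = e] = 5/2` (with the convention `0 · log₂ 0 = 0`). -/
theorem lf2_error_entropy :
    -∑ e : ZMod 2 × ZMod 2 × ZMod 2 × ZMod 2,
        (lf2ErrorDist e).toReal * Real.logb 2 (lf2ErrorDist e).toReal = 5 / 2 := by
  have h : ∀ e : ZMod 2 × ZMod 2 × ZMod 2 × ZMod 2,
      (lf2ErrorDist e).toReal * Real.logb 2 (lf2ErrorDist e).toReal =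
      if e = (0, 0, 0, 0) then (1/2 : ℝ) * Real.logb 2 (1/2)
      else if e.2.2.2 = 1 then (1/16 : ℝ) * Real.logb 2 (1/16) else 0 := by
    intro e; rw [lf2_val]; split_ifs <;> simp
  rw [Finset.sum_congr rfl fun e _ => h e, Finset.sum_ite, Finset.sum_ite,
    Finset.sum_const, Finset.sum_const, Finset.sum_const, Finset.filter_filter,
    Finset.filter_filter]
  rw [show (Finset.filter (fun e : ZMod 2 × ZMod 2 × ZMod 2 × ZMod 2 => e = (0,0,0,0)) Finset.univ).card = 1 from by decide]
  rw [show (Finset.filter (fun e : ZMod 2 × ZMod 2 × ZMod 2 × ZMod 2 => ¬e = (0,0,0,0) ∧ e.2.2.2 = 1) Finset.univ).card = 8 from by decide]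
  have lb : Real.logb 2 (2:ℝ) = 1 := Real.logb_self_eq_one (by norm_num)
  have l2 : Real.logb 2 (1/2 : ℝ) = -1 := by
    rw [one_div, Real.logb_inv, lb]
  have l16 : Real.logb 2 (16 : ℝ) = 4 := by
    rw [show (16:ℝ) = 2^(4:ℕ) by norm_num, Real.logb_pow, lb]; norm_num
  have l16' : Real.logb 2 (1/16 : ℝ) = -4 := by rw [one_div, Real.logb_inv, l16]
  simp [l2, l16, l16']
  norm_num
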